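/- Let D be a compact convex polytope in R^n, U ⊆ R^n a convex set, and suppose x = Σ_v κ_v v is a convex combination of the vertices v of D with κ_v ≥ 0, Σ κ_v = 1. If for every vertex v there exists λ_v ∈ (0,1] with x + λ_v (v − x) ∈ U, then x ∈ U. -/

import Mathlib

/-- If `x` is a convex combination of the vertices of a polytope, and for every
vertex `v` there is `λ_v ∈ (0,1]` with `x + λ_v (v - x) ∈ U` for a convex `U`,
then `x ∈ U`. -/
theorem stmt_1 {n : ℕ} (D0 : Finset (Fin n → ℝ)) (U : Set (Fin n → ℝ))
    (hU : Convex ℝ U) (κ : (Fin n → ℝ) → ℝ) (x : Fin n → ℝ)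
    (hκ : ∀ v ∈ D0, 0 ≤ κ v) (hsum : ∑ v ∈ D0, κ v = 1)
    (hx : x = ∑ v ∈ D0, κ v • v)
    (h : ∀ v ∈ D0, ∃ l ∈ Set.Ioc (0 : ℝ) 1, x + l • (v - x) ∈ U) :
    x ∈ U := by
  have h' : ∀ v : Fin n → ℝ, ∃ l ∈ Set.Ioc (0 : ℝ) 1,
      v ∈ D0 → x + l • (v - x) ∈ U := by
    intro v
    by_cases hv : v ∈ D0
    · obtain ⟨l, hl, hmem⟩ := h v hv
      exact ⟨l, hl, fun _ => hmem⟩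
    · exact ⟨1, ⟨one_pos, le_refl 1⟩, fun hv' => absurd hv' hv⟩
  choose l hl hmem using h'
  have hlpos : ∀ v, 0 < l v := fun v => (hl v).1
  set S : ℝ := ∑ v ∈ D0, κ v / l v with hS
  have hterm : ∀ v ∈ D0, 0 ≤ κ v / l v := fun v hv =>
    div_nonneg (hκ v hv) (hlpos v).le
  have hSpos : 0 < S := by
    obtain ⟨v, hv, hvpos⟩ : ∃ v ∈ D0, 0 < κ v := by
      by_contra hcon
      push_neg at hcon
      have : ∑ v ∈ D0, κ v = 0 :=
        Finset.sum_eq_zero fun v hv => le_antisymm (hcon v hv) (hκ v hv)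
      simp [this] at hsum
    exact Finset.sum_pos' hterm ⟨v, hv, div_pos hvpos (hlpos v)⟩
  set δ : (Fin n → ℝ) → ℝ := fun v => (κ v / l v) / S with hδ
  have hδnn : ∀ v ∈ D0, 0 ≤ δ v := fun v hv =>
    div_nonneg (hterm v hv) hSpos.le
  have hδsum : ∑ v ∈ D0, δ v = 1 := by
    simp only [hδ, div_eq_mul_inv]
    rw [← Finset.sum_mul]
    field_simp
    exact hS.symm
  have key : x = ∑ v ∈ D0, δ v • (x + l v • (v - x)) := by
    have hexp : ∀ v ∈ D0, δ v • (x + l v • (v - x))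
        = δ v • x + (κ v / S) • v - (κ v / S) • x := by
      intro v hv
      have hlne : l v ≠ 0 := (hlpos v).ne'
      rw [smul_add, smul_smul, smul_sub]
      have : δ v * l v = κ v / S := by
        field_simp [hδ]
        simp only [hδ]
        rw [div_mul_eq_mul_div, div_mul_cancel₀ _ hlne, div_mul_cancel₀ _ hSpos.ne']
      rw [this]
      abel
    rw [Finset.sum_congr rfl hexp]
    rw [Finset.sum_sub_distrib, Finset.sum_add_distrib]
    rw [← Finset.sum_smul, hδsum, one_smul]
    have h1 : ∑ v ∈ D0, (κ v / S) • v = (S⁻¹ : ℝ) • ∑ v ∈ D0, κ v • v := by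
      rw [Finset.smul_sum]
      exact Finset.sum_congr rfl fun v hv => by
        rw [smul_smul, div_eq_inv_mul]
    have h2 : ∑ v ∈ D0, (κ v / S) • x = (S⁻¹ : ℝ) • x := by
      rw [← Finset.sum_smul]
      congr 1
      rw [← Finset.sum_div, hsum]
      simp [div_eq_inv_mul]
    rw [h1, h2, ← hx]
    abel
  rw [key]
  exact hU.sum_mem hδnn hδsum fun v hv => hmem v hv
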